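/- Let A and B be two Young diagrams both lying in Y_n and both lying in Y_k for some k. Then there is an n-flip between A and B if and only if there is a k-flip between them. In particular, the existence of an m-flip between two diagrams is independent of m (for all m such that both diagrams lie in Y_m). -/

import Mathlib

/-- `(a,b)` is a diagonal of the convex `n`-gon with vertices `0, …, n-1`. -/
def IsDiagonal (n a b : ℕ) : Prop :=
  a + 2 ≤ b ∧ b ≤ n - 1 ∧ ¬(a = 0 ∧ b = n - 1)

/-- Two diagonals (as ordered pairs, smaller endpoint first) cross each other. -/
def Crossing (p q : ℕ × ℕ) : Prop :=
  (p.1 < q.1 ∧ q.1 < p.2 ∧ p.2 < q.2) ∨ (q.1 < p.1 ∧ p.1 < q.2 ∧ q.2 < p.2)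

/-- A triangulation of the convex `n`-gon: a set of `n - 3` pairwise
non-crossing diagonals (equivalently, a maximal non-crossing set of diagonals). -/
def IsTriangulation (n : ℕ) (T : Finset (ℕ × ℕ)) : Prop :=
  (∀ p ∈ T, IsDiagonal n p.1 p.2) ∧
  (∀ p ∈ T, ∀ q ∈ T, ¬ Crossing p q) ∧
  T.card = n - 3
/-- The list of tails (smaller endpoints) of the diagonals of `T`,
sorted in decreasing order. -/
def tails (T : Finset (ℕ × ℕ)) : List ℕ :=
  (T.val.map Prod.fst).sort (· ≥ ·)

/-- `lam T k` is the `k`-th largest tail `λ_k` of a diagonal of `T`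
(`k ≥ 1`; it is `0` if `T` has fewer than `k` diagonals). -/
def lam (T : Finset (ℕ × ℕ)) : ℕ → ℕ :=
  fun k => if k = 0 then 0 else (tails T).getD (k - 1) 0

/-- The partition `f` (with `f k` the length of row `k`, `k ≥ 1`) lies in `Y_n`:
`f k ≤ n - k` for all `k ≥ 1`. -/
def InY (n : ℕ) (f : ℕ → ℕ) : Prop :=
  f 0 = 0 ∧ (∀ k, 1 ≤ k → f (k + 1) ≤ f k) ∧ (∀ k, 1 ≤ k → f k ≤ n - k)
/-- Two triangulations are related by a flip iff they differ in exactly one diagonal. -/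
def FlipRel (A B : Finset (ℕ × ℕ)) : Prop :=
  (A \ B).card = 1 ∧ (B \ A).card = 1
/-- There is an `n`-flip between the Young diagrams `A` and `B`:
the corresponding triangulations of the `(n+2)`-gon under the bijection `Λ_{n+2}`
are related by a flip. -/
def NFlip (n : ℕ) (A B : ℕ → ℕ) : Prop :=
  ∃ T T' : Finset (ℕ × ℕ), IsTriangulation (n + 2) T ∧ IsTriangulation (n + 2) T' ∧
    lam T = A ∧ lam T' = B ∧ FlipRel T T'

/- ## helper lemmas -/

lemma sorted_le_head (l : List ℕ) (h : l.Pairwise (· ≥ ·)) : ∀ x ∈ l, x ≤ l.getD 0 0 := by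
  cases l with
  | nil => simp
  | cons y t =>
    intro x hx
    rcases List.mem_cons.mp hx with rfl | hx
    · simp
    · simpa using (List.pairwise_cons.mp h).1 x hx

lemma sorted_drop_le (l : List ℕ) (h : l.Pairwise (· ≥ ·)) :
    ∀ t, ∀ x ∈ l.drop t, x ≤ l.getD t 0 := by
  induction l with
  | nil => simp
  | cons y l' ih =>
    intro t x hx
    cases t with
    | zero => exact sorted_le_head _ h x hx
    | succ t => exact ih (List.pairwise_cons.mp h).2 t x (by simpa using hx)

lemma countP_le_of_sorted (l : List ℕ) (h : l.Pairwise (· ≥ ·)) (s t : ℕ)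
    (hgd : l.getD t 0 < s) : l.countP (fun x => decide (s ≤ x)) ≤ t := by
  have h0 : l.countP (fun x => decide (s ≤ x)) =
      (l.take t).countP (fun x => decide (s ≤ x)) +
        (l.drop t).countP (fun x => decide (s ≤ x)) := by
    rw [← List.countP_append, List.take_append_drop]
  have h1 : (l.drop t).countP (fun x => decide (s ≤ x)) = 0 := by
    rw [List.countP_eq_zero]
    intro a ha
    have := sorted_drop_le l h t a ha
    simp only [decide_eq_true_eq]
    omega
  have h2 := List.countP_le_length (p := fun x => decide (s ≤ x)) (l := l.take t)
  have h3 : (l.take t).length ≤ t := by simp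
  omega

lemma getD_append_zero (L : List ℕ) (i : ℕ) : (L ++ [0]).getD i 0 = L.getD i 0 := by
  induction L generalizing i with
  | nil => cases i <;> simp
  | cons y t ih =>
    cases i with
    | zero => simp
    | succ i => simpa using ih i

lemma tails_sorted (T : Finset (ℕ × ℕ)) : (tails T).Pairwise (· ≥ ·) :=
  Multiset.pairwise_sort _ _

lemma tails_length (T : Finset (ℕ × ℕ)) : (tails T).length = T.card := by
  simp [tails]

lemma mem_tails_of_mem {T : Finset (ℕ × ℕ)} {p : ℕ × ℕ} (hp : p ∈ T) : p.1 ∈ tails T := by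
  rw [tails, Multiset.mem_sort]
  exact Multiset.mem_map_of_mem _ hp

lemma tails_insert (T : Finset (ℕ × ℕ)) (c : ℕ) (h : (0, c) ∉ T) :
    tails (insert (0, c) T) = tails T ++ [0] := by
  have hperm : (tails (insert (0, c) T)).Perm (tails T ++ [0]) := by
    rw [← Multiset.coe_eq_coe]
    show ((tails (insert (0, c) T) : Multiset ℕ)) = ((tails T ++ [0] : List ℕ) : Multiset ℕ)
    rw [tails, Multiset.sort_eq, Finset.insert_val_of_notMem h]
    have : ((tails T ++ [0] : List ℕ) : Multiset ℕ) = (tails T : Multiset ℕ) + ([0] : List ℕ) := by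
      exact_mod_cast rfl
    rw [this, tails, Multiset.sort_eq]
    simp [Multiset.map_cons]
    rw [add_comm]
    simp [Multiset.singleton_add]
  apply List.Perm.eq_of_pairwise' (tails_sorted _) ?_ hperm
  rw [List.pairwise_append]
  refine ⟨tails_sorted T, by simp, ?_⟩
  intro x hx y hy
  simp at hy
  subst hy
  exact Nat.zero_le x

lemma lam_insert (T : Finset (ℕ × ℕ)) (c : ℕ) (h : (0, c) ∉ T) :
    lam (insert (0, c) T) = lam T := by
  funext k
  unfold lam
  cases k with
  | zero => simp
  | succ k =>
    simp only [Nat.succ_ne_zero, if_false]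
    rw [tails_insert T c h, getD_append_zero]

lemma card_filter_ge (T : Finset (ℕ × ℕ)) (s : ℕ) :
    (T.filter (fun p => s ≤ p.1)).card = (tails T).countP (fun x => decide (s ≤ x)) := by
  have h1 : Multiset.countP (fun x => s ≤ x) ((tails T : List ℕ) : Multiset ℕ)
      = (tails T).countP (fun x => decide (s ≤ x)) := Multiset.coe_countP _ _
  rw [← h1, tails, Multiset.sort_eq, Multiset.countP_map]
  rfl

lemma chords_bound : ∀ (M : ℕ) (S : Finset (ℕ × ℕ)),
    (∀ p ∈ S, p.1 + 2 ≤ p.2 ∧ p.2 ≤ M) →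
    (∀ p ∈ S, ∀ q ∈ S, ¬ Crossing p q) →
    S.card ≤ M - 1 := by
  intro M
  induction M using Nat.strong_induction_on with
  | _ M ih =>
  intro S hd hc
  rcases S.eq_empty_or_nonempty with rfl | hne
  · simp
  obtain ⟨p0, hp0, hmin⟩ := S.exists_min_image (fun p => p.2 - p.1) hne
  obtain ⟨a, b⟩ := p0
  have hab1 : a + 2 ≤ b := (hd _ hp0).1
  have hab2 : b ≤ M := (hd _ hp0).2
  -- no endpoint strictly inside (a,b)
  have hin : ∀ p ∈ S, (p.1 ≤ a ∨ b ≤ p.1) ∧ (p.2 ≤ a ∨ b ≤ p.2) := by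
    intro p hp
    have hpd := hd p hp
    have h1 : ¬((p.1 < a ∧ a < p.2 ∧ p.2 < b) ∨ (a < p.1 ∧ p.1 < b ∧ b < p.2)) :=
      hc p hp (a, b) hp0
    have h2 : ¬((a < p.1 ∧ p.1 < b ∧ b < p.2) ∨ (p.1 < a ∧ a < p.2 ∧ p.2 < b)) :=
      hc (a, b) hp0 p hp
    have hm : b - a ≤ p.2 - p.1 := hmin p hp
    omega
  set f : ℕ × ℕ → ℕ × ℕ := fun p =>
    (if p.1 < b then p.1 else p.1 + a + 1 - b, if p.2 < b then p.2 else p.2 + a + 1 - b)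
    with hf
  set S' := (S.erase (a, b)).image f with hS'
  have hfm : ∀ p : ℕ × ℕ, f p =
      (if p.1 < b then p.1 else p.1 + a + 1 - b, if p.2 < b then p.2 else p.2 + a + 1 - b) :=
    fun p => rfl
  have hcard : S'.card = S.card - 1 := by
    rw [hS', Finset.card_image_of_injOn, Finset.card_erase_of_mem hp0]
    intro p hp q hq hpq
    have hp' : p ∈ S := Finset.mem_of_mem_erase (Finset.mem_coe.mp hp)
    have hq' : q ∈ S := Finset.mem_of_mem_erase (Finset.mem_coe.mp hq)
    have h1 := congrArg Prod.fst hpq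
    have h2 := congrArg Prod.snd hpq
    rw [hfm, hfm] at h1 h2
    simp only at h1 h2
    have i1 := hin p hp'
    have i2 := hin q hq'
    have e1 : p.1 = q.1 := by split_ifs at h1 <;> omega
    have e2 : p.2 = q.2 := by split_ifs at h2 <;> omega
    exact Prod.ext_iff.mpr ⟨e1, e2⟩
  have hM' : M + a + 1 - b < M := by omega
  have hd' : ∀ p ∈ S', p.1 + 2 ≤ p.2 ∧ p.2 ≤ M + a + 1 - b := by
    intro q hq
    rw [hS', Finset.mem_image] at hq
    obtain ⟨p, hp, rfl⟩ := hq
    have hpS := Finset.mem_of_mem_erase hp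
    have hpne : p ≠ (a, b) := Finset.ne_of_mem_erase hp
    have hpne' : ¬(p.1 = a ∧ p.2 = b) := by
      rintro ⟨u1, u2⟩; exact hpne (Prod.ext_iff.mpr ⟨u1, u2⟩)
    have h3 := hin p hpS
    have h4 := hd p hpS
    rw [hfm]
    simp only
    constructor
    · split_ifs <;> omega
    · split_ifs <;> omega
  have hc' : ∀ p ∈ S', ∀ q ∈ S', ¬ Crossing p q := by
    intro q1 hq1 q2 hq2 hcr
    rw [hS', Finset.mem_image] at hq1 hq2
    obtain ⟨p1, hp1, rfl⟩ := hq1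
    obtain ⟨p2, hp2, rfl⟩ := hq2
    have hp1S := Finset.mem_of_mem_erase hp1
    have hp2S := Finset.mem_of_mem_erase hp2
    have i1 := hin p1 hp1S
    have i2 := hin p2 hp2S
    apply hc p1 hp1S p2 hp2S
    rw [hfm, hfm] at hcr
    unfold Crossing at hcr ⊢
    simp only at hcr
    split_ifs at hcr <;> omega
  have hIH := ih _ hM' S' hd' hc'
  have hScard : 1 ≤ S.card := Finset.card_pos.mpr hne
  omega

lemma lemA (n : ℕ) (hn : 1 ≤ n) (T : Finset (ℕ × ℕ)) (hT : IsTriangulation (n + 3) T)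
    (A : ℕ → ℕ) (hA : InY n A) (hlam : lam T = A) : (0, n + 1) ∈ T := by
  obtain ⟨hdiag, hcross, hcard⟩ := hT
  have hcardn : T.card = n := by omega
  have htail : ∀ p ∈ T, p.1 ≤ n - 1 := by
    intro p hp
    have h1 : p.1 ≤ (tails T).getD 0 0 :=
      sorted_le_head _ (tails_sorted T) _ (mem_tails_of_mem hp)
    have h2 : lam T 1 = (tails T).getD 0 0 := by simp [lam]
    have h3 : A 1 ≤ n - 1 := hA.2.2 1 le_rfl
    rw [hlam] at h2
    omega
  by_contra hnot
  by_cases hex : ∃ p ∈ T, p.2 = n + 2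
  · -- some diagonal has head n+2 ; take minimal tail among them
    have hne : (T.filter (fun p => p.2 = n + 2)).Nonempty := by
      obtain ⟨p, hp, hp2⟩ := hex
      exact ⟨p, Finset.mem_filter.mpr ⟨hp, hp2⟩⟩
    obtain ⟨q0, hq0, hqmin⟩ :=
      (T.filter (fun p => p.2 = n + 2)).exists_min_image (fun p => p.1) hne
    obtain ⟨hq0T, hq02⟩ := Finset.mem_filter.mp hq0
    have ha1pos : 1 ≤ q0.1 := by
      have hd1 := hdiag q0 hq0T
      unfold IsDiagonal at hd1
      omega
    have ha1le : q0.1 ≤ n - 1 := htail q0 hq0T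
    have hS2 : ∀ p ∈ T, p.1 < q0.1 → p.2 ≤ q0.1 := by
      intro p hp hlt
      have hd1 := hdiag p hp
      unfold IsDiagonal at hd1
      have hcx : ¬((p.1 < q0.1 ∧ q0.1 < p.2 ∧ p.2 < q0.2) ∨
          (q0.1 < p.1 ∧ p.1 < q0.2 ∧ q0.2 < p.2)) := hcross p hp q0 hq0T
      by_cases hp2 : p.2 = n + 2
      · have := hqmin p (Finset.mem_filter.mpr ⟨hp, hp2⟩)
        omega
      · omega
    have hS2card : (T.filter (fun p => p.1 < q0.1)).card ≤ q0.1 - 1 := by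
      apply chords_bound q0.1
      · intro p hp
        obtain ⟨hpT, hplt⟩ := Finset.mem_filter.mp hp
        have hd1 := hdiag p hpT
        unfold IsDiagonal at hd1
        exact ⟨hd1.1, hS2 p hpT hplt⟩
      · intro p hp q hq
        exact hcross p (Finset.mem_filter.mp hp).1 q (Finset.mem_filter.mp hq).1
    have hsplit := Finset.card_filter_add_card_filter_not
      (s := T) (p := fun p => q0.1 ≤ p.1)
    have hEq : (T.filter (fun p => ¬ q0.1 ≤ p.1)) = (T.filter (fun p => p.1 < q0.1)) := by
      apply Finset.filter_congr
      intro x _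
      omega
    have hS1card : (T.filter (fun p => q0.1 ≤ p.1)).card ≤ n - q0.1 := by
      rw [card_filter_ge]
      apply countP_le_of_sorted _ (tails_sorted T) q0.1 (n - q0.1)
      have h2 : lam T (n - q0.1 + 1) = (tails T).getD (n - q0.1) 0 := by simp [lam]
      have h3 : A (n - q0.1 + 1) ≤ n - (n - q0.1 + 1) := hA.2.2 _ (by omega)
      rw [hlam] at h2
      omega
    rw [hEq] at hsplit
    omega
  · -- no diagonal has head n+2 : both (0,n+1),(0,n+2) could be added
    have h2 : (0, n + 2) ∉ T := fun h => hex ⟨_, h, rfl⟩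
    have hhead : ∀ p ∈ T, p.2 ≤ n + 1 := by
      intro p hp
      have hd1 := hdiag p hp
      unfold IsDiagonal at hd1
      have : p.2 ≠ n + 2 := fun h => hex ⟨_, hp, h⟩
      omega
    have h12 : (0, n + 1) ∉ insert (0, n + 2) T := by
      intro h
      rcases Finset.mem_insert.mp h with h | h
      · exact absurd (congrArg Prod.snd h) (by simp)
      · exact hnot h
    have hbound := chords_bound (n + 2) (insert (0, n + 1) (insert (0, n + 2) T)) ?_ ?_
    · have hc1 : (insert (0, n + 1) (insert (0, n + 2) T)).card = n + 2 := by
        rw [Finset.card_insert_of_notMem h12, Finset.card_insert_of_notMem h2, hcardn]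
      omega
    · intro p hp
      rcases Finset.mem_insert.mp hp with rfl | hp
      · constructor <;> simp <;> omega
      rcases Finset.mem_insert.mp hp with rfl | hp
      · constructor <;> simp <;> omega
      · have hd1 := hdiag p hp
        unfold IsDiagonal at hd1
        exact ⟨hd1.1, by omega⟩
    · intro p hp q hq
      have key : ∀ r ∈ T, ¬ Crossing r (0, n + 1) ∧ ¬ Crossing (0, n + 1) r ∧
          ¬ Crossing r (0, n + 2) ∧ ¬ Crossing (0, n + 2) r := by
        intro r hr
        have hh := hhead r hr
        have hd1 := hdiag r hr
        unfold IsDiagonal at hd1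
        unfold Crossing
        simp only
        omega
      have hcc : ¬ Crossing (0, n + 1) (0, n + 2) ∧ ¬ Crossing (0, n + 2) (0, n + 1) ∧
          ¬ Crossing (0, n + 1) (0, n + 1) ∧ ¬ Crossing (0, n + 2) (0, n + 2) := by
        unfold Crossing
        simp only
        omega
      rcases Finset.mem_insert.mp hp with rfl | hp <;>
        rcases Finset.mem_insert.mp hq with rfl | hq
      · exact hcc.2.2.1
      · rcases Finset.mem_insert.mp hq with rfl | hq
        · exact hcc.1
        · exact (key q hq).2.1
      · rcases Finset.mem_insert.mp hp with rfl | hp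
        · exact hcc.2.1
        · exact (key p hp).1
      · rcases Finset.mem_insert.mp hp with rfl | hp <;>
          rcases Finset.mem_insert.mp hq with rfl | hq
        · exact hcc.2.2.2
        · exact (key q hq).2.2.2
        · exact (key p hp).2.2.1
        · exact hcross p hp q hq

/- ## extension and restriction of triangulations -/

lemma extend_triang (n : ℕ) (hn : 1 ≤ n) (T : Finset (ℕ × ℕ))
    (hT : IsTriangulation (n + 2) T) :
    (0, n + 1) ∉ T ∧ IsTriangulation (n + 3) (insert (0, n + 1) T) := by
  obtain ⟨hdiag, hcross, hcard⟩ := hT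
  have hmem : (0, n + 1) ∉ T := by
    intro h
    have hd1 : 0 + 2 ≤ n + 1 ∧ n + 1 ≤ (n + 2) - 1 ∧ ¬(0 = 0 ∧ n + 1 = (n + 2) - 1) :=
      hdiag _ h
    omega
  have hhead : ∀ r ∈ T, r.2 ≤ n + 1 := by
    intro r hr
    have := hdiag r hr
    unfold IsDiagonal at this
    omega
  refine ⟨hmem, ?_, ?_, ?_⟩
  · intro p hp
    rcases Finset.mem_insert.mp hp with rfl | hp
    · show IsDiagonal (n + 3) 0 (n + 1)
      unfold IsDiagonal
      omega
    · have := hdiag p hp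
      unfold IsDiagonal at this ⊢
      omega
  · intro p hp q hq
    have key : ∀ r ∈ T, ¬ Crossing r (0, n + 1) ∧ ¬ Crossing (0, n + 1) r := by
      intro r hr
      have hh := hhead r hr
      have hd1 := hdiag r hr
      unfold IsDiagonal at hd1
      unfold Crossing
      simp only
      omega
    have hcc : ¬ Crossing (0, n + 1) (0, n + 1) := by
      unfold Crossing; simp only; omega
    rcases Finset.mem_insert.mp hp with rfl | hp <;>
      rcases Finset.mem_insert.mp hq with rfl | hq
    · exact hcc
    · exact (key q hq).2
    · exact (key p hp).1
    · exact hcross p hp q hq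
  · rw [Finset.card_insert_of_notMem hmem]
    omega

lemma shrink_triang (n : ℕ) (hn : 1 ≤ n) (T : Finset (ℕ × ℕ))
    (hT : IsTriangulation (n + 3) T) (A : ℕ → ℕ) (hA : InY n A) (hlam : lam T = A) :
    (0, n + 1) ∈ T ∧ IsTriangulation (n + 2) (T.erase (0, n + 1)) ∧
      lam (T.erase (0, n + 1)) = A := by
  have hmem := lemA n hn T hT A hA hlam
  obtain ⟨hdiag, hcross, hcard⟩ := hT
  have hhead : ∀ p ∈ T, p ≠ (0, n + 1) → p.2 ≤ n + 1 := by
    intro p hp hne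
    have hd1 := hdiag p hp
    unfold IsDiagonal at hd1
    by_contra hcon
    have hcx : ¬((0 < p.1 ∧ p.1 < n + 1 ∧ n + 1 < p.2) ∨
        (p.1 < 0 ∧ 0 < p.2 ∧ p.2 < n + 1)) := hcross (0, n + 1) hmem p hp
    -- p.2 = n + 2 forced, p.1 ≥ 1 since (0, n+2) is not a diagonal
    omega
  refine ⟨hmem, ⟨?_, ?_, ?_⟩, ?_⟩
  · intro p hp
    have hpT := Finset.mem_of_mem_erase hp
    have hne := Finset.ne_of_mem_erase hp
    have hd1 := hdiag p hpT
    unfold IsDiagonal at hd1 ⊢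
    have h2 := hhead p hpT hne
    have hnep : ¬(p.1 = 0 ∧ p.2 = n + 1) := by
      rintro ⟨e1, e2⟩
      exact hne (Prod.ext_iff.mpr ⟨e1, e2⟩)
    omega
  · intro p hp q hq
    exact hcross _ (Finset.mem_of_mem_erase hp) _ (Finset.mem_of_mem_erase hq)
  · rw [Finset.card_erase_of_mem hmem]
    omega
  · have h := lam_insert (T.erase (0, n + 1)) (n + 1) (Finset.notMem_erase _ _)
    rw [Finset.insert_erase hmem] at h
    rw [← h, hlam]

lemma nflip_two_le {m : ℕ} {A B : ℕ → ℕ} (h : NFlip m A B) : 2 ≤ m := by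
  obtain ⟨T, T', hT, hT', _, _, hF⟩ := h
  have h1 : (T \ T').card = 1 := hF.1
  have h2 : T \ T' ⊆ T := Finset.sdiff_subset
  have h3 := Finset.card_le_card h2
  have h4 := hT.2.2
  omega

lemma sdiff_insert_eq (d : ℕ × ℕ) (U V : Finset (ℕ × ℕ)) (hU : d ∉ U) (hV : d ∉ V) :
    (insert d U) \ (insert d V) = U \ V := by
  ext x
  by_cases hx : x = d
  · subst hx
    simp [hU]
  · simp [Finset.mem_sdiff, Finset.mem_insert, hx]

lemma sdiff_erase_eq (d : ℕ × ℕ) (U V : Finset (ℕ × ℕ)) (hU : d ∈ U) (hV : d ∈ V) :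
    (U.erase d) \ (V.erase d) = U \ V := by
  ext x
  by_cases hx : x = d
  · subst hx
    simp [Finset.mem_sdiff, hV]
  · simp [Finset.mem_sdiff, Finset.mem_erase, hx]

lemma step (n : ℕ) (A B : ℕ → ℕ) (hA : InY n A) (hB : InY n B) :
    NFlip n A B ↔ NFlip (n + 1) A B := by
  constructor
  · intro h
    have hn : 2 ≤ n := nflip_two_le h
    obtain ⟨T, T', hT, hT', hlA, hlB, hF⟩ := h
    obtain ⟨hm, htr⟩ := extend_triang n (by omega) T hT
    obtain ⟨hm', htr'⟩ := extend_triang n (by omega) T' hT'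
    refine ⟨insert (0, n + 1) T, insert (0, n + 1) T', htr, htr', ?_, ?_, ?_⟩
    · rw [lam_insert _ _ hm, hlA]
    · rw [lam_insert _ _ hm', hlB]
    · unfold FlipRel
      rw [sdiff_insert_eq _ _ _ hm hm', sdiff_insert_eq _ _ _ hm' hm]
      exact hF
  · intro h
    have hn : 1 ≤ n := by have := nflip_two_le h; omega
    obtain ⟨T, T', hT, hT', hlA, hlB, hF⟩ := h
    obtain ⟨hm, htr, hl⟩ := shrink_triang n hn T hT A hA hlA
    obtain ⟨hm', htr', hl'⟩ := shrink_triang n hn T' hT' B hB hlB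
    refine ⟨T.erase (0, n + 1), T'.erase (0, n + 1), htr, htr', hl, hl', ?_⟩
    unfold FlipRel
    rw [sdiff_erase_eq _ _ _ hm hm', sdiff_erase_eq _ _ _ hm' hm]
    exact hF

lemma InY_mono {n m : ℕ} (h : n ≤ m) {A : ℕ → ℕ} (hA : InY n A) : InY m A :=
  ⟨hA.1, hA.2.1, fun k hk => le_trans (hA.2.2 k hk) (by omega)⟩

lemma nflip_add (n d : ℕ) (A B : ℕ → ℕ) (hA : InY n A) (hB : InY n B) :
    NFlip n A B ↔ NFlip (n + d) A B := by
  induction d with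
  | zero => rfl
  | succ d ih =>
    rw [ih]
    exact step (n + d) A B (InY_mono (by omega) hA) (InY_mono (by omega) hB)


/-- The existence of an `m`-flip between two Young diagrams is independent of `m`:
if `A, B` lie both in `Y_n` and both in `Y_k`, then there is an `n`-flip between
them if and only if there is a `k`-flip between them. -/
theorem nflip_independent (n k : ℕ) (A B : ℕ → ℕ)
    (hAn : InY n A) (hBn : InY n B) (hAk : InY k A) (hBk : InY k B) :
    NFlip n A B ↔ NFlip k A B := by
  rcases le_total n k with h | h
  · obtain ⟨d, rfl⟩ : ∃ d, k = n + d := ⟨k - n, by omega⟩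
    exact nflip_add n d A B hAn hBn
  · obtain ⟨d, rfl⟩ : ∃ d, n = k + d := ⟨n - k, by omega⟩
    exact (nflip_add k d A B hAk hBk).symm
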